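/- Let h : G ↷ H be a free and proper actor between étale groupoids with surjective anchor ρ : H → G⁽⁰⁾. Then the map i : G ⋉ H⁽⁰⁾ → H, (γ, t) ↦ γ·t, from the transformation groupoid of the action restricted to the unit space, is a continuous injective open groupoid homomorphism fixing the unit space; and the projection p : G ⋉ H⁽⁰⁾ → G, (γ, t) ↦ γ, is a continuous, surjective, proper, fibrewise bijective groupoid homomorphism. -/

import Mathlib

open Topology

/-- A topological groupoid: a set with a partially defined multiplication
(`D a b` expresses composability), an inversion, satisfying the groupoid
axioms, such that inversion is continuous and multiplication is continuous
on the set of composable pairs. -/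
structure TopGroupoid (G : Type*) [TopologicalSpace G] where
  /-- composability -/
  D : G → G → Prop
  /-- partially defined multiplication (junk values off `D`) -/
  comp : G → G → G
  /-- inversion -/
  inv : G → G
  inv_inv : ∀ g, inv (inv g) = g
  d_inv : ∀ g, D g (inv g)
  d_eq : ∀ a b, D a b ↔ comp (inv a) a = comp b (inv b)
  d_comp_left : ∀ {a b c}, D a b → D b c → D (comp a b) c
  d_comp_right : ∀ {a b c}, D a b → D b c → D a (comp b c)
  assoc : ∀ {a b c}, D a b → D b c → comp (comp a b) c = comp a (comp b c)
  cancel_left : ∀ {g h}, D g h → comp (inv g) (comp g h) = h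
  cancel_right : ∀ {g h}, D g h → comp (comp g h) (inv h) = g
  continuous_inv : Continuous inv
  continuousOn_comp : ContinuousOn (fun p : G × G => comp p.1 p.2) {p | D p.1 p.2}

namespace TopGroupoid

variable {G : Type*} [TopologicalSpace G]

/-- The source map `s(γ) = γ⁻¹γ`. -/
def src (S : TopGroupoid G) (g : G) : G := S.comp (S.inv g) g

/-- The range map `r(γ) = γγ⁻¹`. -/
def rng (S : TopGroupoid G) (g : G) : G := S.comp g (S.inv g)

/-- The unit space `G⁽⁰⁾ = {γ⁻¹γ : γ ∈ G}`. -/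
def unitSpace (S : TopGroupoid G) : Set G := Set.range S.src

/-- A groupoid is étale if its range map is a local homeomorphism. -/
def IsEtale (S : TopGroupoid G) : Prop := IsLocalHomeomorph S.rng

/-- An open bisection: an open set on which both the source and the range map
are injective (hence, in an étale groupoid, restrict to homeomorphisms onto
their open images). -/
def IsOpenBisection (S : TopGroupoid G) (U : Set G) : Prop :=
  IsOpen U ∧ Set.InjOn S.src U ∧ Set.InjOn S.rng U

/-- Pointwise product of subsets: `U·V = {γη : γ ∈ U, η ∈ V, s γ = r η}`. -/
def setMul (S : TopGroupoid G) (U V : Set G) : Set G :=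
  {g | ∃ a ∈ U, ∃ b ∈ V, S.D a b ∧ g = S.comp a b}

/-- Pointwise inverse of a subset: `U⁻¹ = {γ⁻¹ : γ ∈ U}`. -/
def setInv (S : TopGroupoid G) (U : Set G) : Set G := S.inv '' U

end TopGroupoid

/-- An actor `G ↷ H`: a continuous left action of `G` on `H` (with anchor map
`ρ : H → G⁽⁰⁾`) which commutes with the right multiplication of `H` on itself. -/
structure Actor {G : Type*} {H : Type*} [TopologicalSpace G] [TopologicalSpace H]
    (S : TopGroupoid G) (T : TopGroupoid H) where
  /-- the anchor map -/
  rho : H → G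
  /-- the action multiplication, partially defined (junk off `s γ = ρ x`) -/
  act : G → H → H
  rho_mem : ∀ x, rho x ∈ S.unitSpace
  continuous_rho : Continuous rho
  continuousOn_act :
    ContinuousOn (fun p : G × H => act p.1 p.2) {p | S.src p.1 = rho p.2}
  rho_act : ∀ {γ x}, S.src γ = rho x → rho (act γ x) = S.rng γ
  act_assoc : ∀ {γ₁ γ₂ x}, S.D γ₁ γ₂ → S.src γ₂ = rho x →
      act γ₁ (act γ₂ x) = act (S.comp γ₁ γ₂) x
  act_unit : ∀ x, act (rho x) x = x
  rho_comp : ∀ {x y}, T.D x y → rho (T.comp x y) = rho x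
  src_act : ∀ {γ x}, S.src γ = rho x → T.src (act γ x) = T.src x
  act_right : ∀ {γ x y}, S.src γ = rho x → T.D x y →
      act γ (T.comp x y) = T.comp (act γ x) y

namespace Actor

variable {G H : Type*} [TopologicalSpace G] [TopologicalSpace H]
variable {S : TopGroupoid G} {T : TopGroupoid H}

/-- An actor is free if the only arrows fixing a unit are units. -/
def Free (A : Actor S T) : Prop :=
  ∀ t ∈ T.unitSpace, ∀ γ : G, S.src γ = A.rho t → A.act γ t = t → γ ∈ S.unitSpace

/-- An actor is proper if the anchor map restricted to the unit space of `H`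
is a proper map. -/
def Proper (A : Actor S T) : Prop := IsProperMap (T.unitSpace.restrict A.rho)

/-- `U·V = {γ·x : γ ∈ U, x ∈ V, s γ = ρ x}`. -/
def actSet (A : Actor S T) (U : Set G) (V : Set H) : Set H :=
  {y | ∃ γ ∈ U, ∃ x ∈ V, S.src γ = A.rho x ∧ y = A.act γ x}

end Actor

/-- The carrier of the transformation groupoid `G ⋉ H⁽⁰⁾` associated to an
actor `G ↷ H` restricted to the unit space of `H`. -/
abbrev TransK {G H : Type*} [TopologicalSpace G] [TopologicalSpace H]
    {S : TopGroupoid G} {T : TopGroupoid H} (A : Actor S T) : Type _ :=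
  {q : G × H // q.2 ∈ T.unitSpace ∧ S.src q.1 = A.rho q.2}


section Helpers

namespace TopGroupoid

variable {G : Type*} [TopologicalSpace G] {S : TopGroupoid G}

lemma d_inv' (g : G) : S.D (S.inv g) g := by
  have := S.d_inv (S.inv g); rwa [S.inv_inv] at this

lemma src_inv (g : G) : S.src (S.inv g) = S.rng g := by
  simp [src, rng, S.inv_inv]

lemma rng_inv (g : G) : S.rng (S.inv g) = S.src g := by
  simp [src, rng, S.inv_inv]

lemma d_iff {a b : G} : S.D a b ↔ S.src a = S.rng b := S.d_eq a b

lemma right_id (g : G) : S.comp g (S.src g) = g := by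
  have := S.cancel_left (d_inv' g)
  rwa [S.inv_inv] at this

lemma left_id (g : G) : S.comp (S.rng g) g = g := by
  have h : S.comp (S.comp g (S.inv g)) g = S.comp g (S.comp (S.inv g) g) :=
    S.assoc (S.d_inv g) (d_inv' g)
  rw [rng, h]; exact right_id g

lemma src_comp {g h : G} (hgh : S.D g h) : S.src (S.comp g h) = S.src h := by
  have h1 : S.D (S.comp g h) (S.inv h) := S.d_comp_left hgh (S.d_inv h)
  have h2 := d_iff.mp h1
  rwa [rng_inv] at h2

lemma rng_comp {g h : G} (hgh : S.D g h) : S.rng (S.comp g h) = S.rng g := by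
  have h1 : S.D (S.inv g) (S.comp g h) := S.d_comp_right (d_inv' g) hgh
  have h2 := d_iff.mp h1
  rw [src_inv] at h2
  exact h2.symm

lemma src_mem_unitSpace (g : G) : S.src g ∈ S.unitSpace := ⟨g, rfl⟩

lemma src_unit {u : G} (hu : u ∈ S.unitSpace) : S.src u = u := by
  obtain ⟨g, rfl⟩ := hu
  simpa [src] using src_comp (S := S) (d_inv' g)

lemma rng_unit {u : G} (hu : u ∈ S.unitSpace) : S.rng u = u := by
  obtain ⟨g, rfl⟩ := hu
  rw [src, rng_comp (d_inv' g), rng_inv]; rfl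

/-- inversion as a homeomorphism -/
def invHomeo (S : TopGroupoid G) : G ≃ₜ G where
  toFun := S.inv
  invFun := S.inv
  left_inv := S.inv_inv
  right_inv := S.inv_inv
  continuous_toFun := S.continuous_inv
  continuous_invFun := S.continuous_inv

lemma isLocalHomeomorph_src (hS : S.IsEtale) : IsLocalHomeomorph S.src := by
  have h : S.src = S.rng ∘ S.inv := by
    funext g; simp [Function.comp, rng_inv]
  rw [h]
  exact hS.comp S.invHomeo.isLocalHomeomorph

lemma continuous_src (hS : S.IsEtale) : Continuous S.src :=
  (isLocalHomeomorph_src hS).continuous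

end TopGroupoid

namespace Actor

variable {G H : Type*} [TopologicalSpace G] [TopologicalSpace H]
variable {S : TopGroupoid G} {T : TopGroupoid H}

lemma act_inv_act (A : Actor S T) {γ : G} {x : H} (h : S.src γ = A.rho x) :
    A.act (S.inv γ) (A.act γ x) = x := by
  have h1 : S.src (S.inv γ) = A.rho (A.act γ x) := by
    rw [TopGroupoid.src_inv, A.rho_act h]
  have h2 := A.act_assoc (TopGroupoid.d_inv' γ) h
  rw [h2]
  have : S.comp (S.inv γ) γ = S.src γ := rfl
  rw [this, h]
  exact A.act_unit x

lemma src_act_unit (A : Actor S T) {γ : G} {t : H} (ht : t ∈ T.unitSpace)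
    (h : S.src γ = A.rho t) : T.src (A.act γ t) = t := by
  rw [A.src_act h, TopGroupoid.src_unit ht]

/-- the key injectivity lemma -/
lemma inj (A : Actor S T) (hfree : A.Free) {γ η : G} {x y : H}
    (hx : x ∈ T.unitSpace) (hy : y ∈ T.unitSpace)
    (hγ : S.src γ = A.rho x) (hη : S.src η = A.rho y)
    (heq : A.act γ x = A.act η y) : γ = η ∧ x = y := by
  have hxy : x = y := by
    have h1 : T.src (A.act γ x) = x := A.src_act_unit hx hγ
    have h2 : T.src (A.act η y) = y := A.src_act_unit hy hη
    rw [← h1, heq, h2]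
  subst hxy
  refine ⟨?_, rfl⟩
  have hr : S.rng γ = S.rng η := by
    have e1 := A.rho_act hγ
    have e2 := A.rho_act hη
    rw [← heq] at e2
    rw [← e1, ← e2]
  have hD : S.D (S.inv η) γ := by
    rw [TopGroupoid.d_iff, TopGroupoid.src_inv, hr]
  set δ := S.comp (S.inv η) γ with hδ
  have hactδ : A.act δ x = x := by
    have h3 := A.act_assoc hD hγ
    rw [← h3, heq, A.act_inv_act hη]
  have hsrcδ : S.src δ = A.rho x := by
    rw [hδ, TopGroupoid.src_comp hD, hγ]
  have hunit : δ ∈ S.unitSpace := hfree x hx δ hsrcδ hactδ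
  have hδval : δ = S.src η := by
    have := TopGroupoid.rng_unit hunit
    rw [← this, hδ, TopGroupoid.rng_comp hD, TopGroupoid.rng_inv]
  have hcl : S.comp η δ = γ := by
    have := S.cancel_left (g := S.inv η) (h := γ) hD
    rwa [S.inv_inv] at this
  rw [← hcl, hδval, TopGroupoid.right_id]

lemma d_of_rng (A : Actor S T) {γ η : G} {x y : H}
    (hγ : S.src γ = A.rho x) (hη : S.src η = A.rho y)
    (hx : x = T.rng (A.act η y)) : S.D γ η := by
  have h1 : A.rho x = S.rng η := by
    rw [hx]
    have h2 : A.rho (T.rng (A.act η y)) = A.rho (A.act η y) :=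
      A.rho_comp (T.d_inv (A.act η y))
    rw [h2, A.rho_act hη]
  rw [TopGroupoid.d_iff, hγ, h1]

end Actor

end Helpers

/-- For a free and proper actor `h : G ↷ H` with surjective anchor:
the map `i : G ⋉ H⁽⁰⁾ → H`, `(γ, t) ↦ γ·t`, is continuous, injective, open,
is a groupoid homomorphism (for the transformation-groupoid multiplication
`(γ, x)(η, y) = (γη, y)` defined when `x = r(η·y)`), and fixes the unit space;
and the projection `p : G ⋉ H⁽⁰⁾ → G`, `(γ, t) ↦ γ`, is a continuous,
surjective, proper, fibrewise bijective groupoid homomorphism. -/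
theorem transformation_groupoid_maps {G H : Type*} [TopologicalSpace G]
    [TopologicalSpace H] {S : TopGroupoid G} {T : TopGroupoid H}
    (hS : S.IsEtale) (hT : T.IsEtale) (A : Actor S T)
    (hfree : A.Free) (hproper : A.Proper)
    (hsurj : ∀ u ∈ S.unitSpace, ∃ t ∈ T.unitSpace, A.rho t = u) :
    -- the embedding i
    Continuous (fun q : TransK A => A.act q.1.1 q.1.2) ∧
    Function.Injective (fun q : TransK A => A.act q.1.1 q.1.2) ∧
    IsOpenMap (fun q : TransK A => A.act q.1.1 q.1.2) ∧
    -- i is a groupoid homomorphism for the transformation groupoid product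
    (∀ (γ η : G) (x y : H), x ∈ T.unitSpace → y ∈ T.unitSpace →
      S.src γ = A.rho x → S.src η = A.rho y → x = T.rng (A.act η y) →
      A.act (S.comp γ η) y = T.comp (A.act γ x) (A.act η y)) ∧
    -- i fixes the unit space (units of G ⋉ H⁽⁰⁾ are pairs with unit first coordinate)
    (∀ q : TransK A, q.1.1 ∈ S.unitSpace → A.act q.1.1 q.1.2 = q.1.2) ∧
    -- the projection p
    Continuous (fun q : TransK A => q.1.1) ∧
    (∀ γ : G, ∃ q : TransK A, q.1.1 = γ) ∧
    IsProperMap (fun q : TransK A => q.1.1) ∧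
    (∀ (γ η : G) (x y : H) (hx : x ∈ T.unitSpace) (hy : y ∈ T.unitSpace)
      (hγ : S.src γ = A.rho x) (hη : S.src η = A.rho y),
      x = T.rng (A.act η y) → S.D γ η) ∧  -- p preserves composability
    (∀ y ∈ T.unitSpace, Set.BijOn (fun q : TransK A => q.1.1)
      {q : TransK A | q.1.2 = y} {γ : G | S.src γ = A.rho y}) := by
  classical
  have csrcS : Continuous S.src := TopGroupoid.continuous_src hS
  have csrcT : Continuous T.src := TopGroupoid.continuous_src hT
  set f : TransK A → H := fun q => A.act q.1.1 q.1.2 with hf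
  have cont_i : Continuous f :=
    A.continuousOn_act.comp_continuous
      ((continuous_fst.comp continuous_subtype_val).prodMk
        (continuous_snd.comp continuous_subtype_val)) (fun q => q.2.2)
  have inj_i : Function.Injective f := by
    rintro ⟨⟨γ, x⟩, hx, hγ⟩ ⟨⟨η, y⟩, hy, hη⟩ heq
    obtain ⟨h1, h2⟩ := A.inj hfree hx hy hγ hη heq
    simp only [Subtype.mk.injEq, Prod.mk.injEq]
    exact ⟨h1, h2⟩
  have open_i : IsOpenMap f := by
    intro O hO
    rw [isOpen_iff_mem_nhds]
    rintro z ⟨q₀, hq₀O, rfl⟩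
    obtain ⟨⟨γ₀, t₀⟩, ht₀, hγ₀⟩ := q₀
    obtain ⟨Ω, hΩ, rfl⟩ := isOpen_induced_iff.mp hO
    obtain ⟨U, V, hUo, hVo, hγ₀U, ht₀V, hUV⟩ := isOpen_prod_iff.mp hΩ γ₀ t₀ hq₀O
    obtain ⟨e, heγ₀, hesrc⟩ := TopGroupoid.isLocalHomeomorph_src hS γ₀
    set z₀ := A.act γ₀ t₀ with hz₀def
    obtain ⟨b, hbz₀, hbsrc⟩ := TopGroupoid.isLocalHomeomorph_src hT z₀
    set U₁ : Set G := U ∩ e.source with hU₁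
    set T₁ : Set G := S.src '' U₁ with hT₁
    have hT₁sub : T₁ ⊆ e.target := by
      rintro w ⟨γ', hγ', rfl⟩
      rw [hesrc]
      exact e.map_source hγ'.2
    have hT₁open : IsOpen T₁ := by
      rw [hT₁, hesrc]
      exact e.isOpen_image_of_subset_source (hUo.inter e.open_source) Set.inter_subset_right
    set g : H → G := fun z => e.symm (A.rho (T.src z)) with hg
    set θ : H → H := fun z => A.act (g z) (T.src z) with hθ
    have keyA : ∀ w ∈ e.target, S.src (e.symm w) = w := by
      intro w hw
      rw [hesrc]
      exact e.right_inv hw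
    set s₀ : Set H := (fun z => A.rho (T.src z)) ⁻¹' e.target with hs₀
    have hρs : Continuous fun z : H => A.rho (T.src z) := A.continuous_rho.comp csrcT
    have hs₀open : IsOpen s₀ := e.open_target.preimage hρs
    have hgcont : ContinuousOn g s₀ :=
      e.continuousOn_symm.comp hρs.continuousOn (fun z hz => hz)
    have hθcont : ContinuousOn θ s₀ := by
      apply A.continuousOn_act.comp (hgcont.prodMk csrcT.continuousOn)
      intro z hz
      exact keyA _ hz
    have hsz₀ : T.src z₀ = t₀ := A.src_act_unit ht₀ hγ₀
    have hρt₀T₁ : A.rho t₀ ∈ T₁ := ⟨γ₀, ⟨hγ₀U, heγ₀⟩, hγ₀⟩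
    have hgz₀ : g z₀ = γ₀ := by
      rw [hg]
      simp only [hsz₀, ← hγ₀, hesrc]
      exact e.left_inv heγ₀
    have hθz₀ : θ z₀ = z₀ := by
      rw [hθ]
      simp only [hgz₀, hsz₀]
      exact hz₀def.symm
    set s₁ : Set H := (fun z => A.rho (T.src z)) ⁻¹' T₁ with hs₁
    have hs₁open : IsOpen s₁ := hT₁open.preimage hρs
    have hs₁s₀ : s₁ ⊆ s₀ := fun z hz => hT₁sub hz
    set W : Set H := b.source ∩ T.src ⁻¹' V ∩ s₁ ∩ (s₀ ∩ θ ⁻¹' b.source) with hW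
    have hWopen : IsOpen W :=
      (((b.open_source.inter (hVo.preimage csrcT)).inter hs₁open).inter
        (hθcont.isOpen_inter_preimage hs₀open b.open_source))
    have hz₀W : z₀ ∈ W := by
      refine ⟨⟨⟨hbz₀, ?_⟩, ?_⟩, ?_, ?_⟩
      · rw [Set.mem_preimage, hsz₀]; exact ht₀V
      · rw [hs₁, Set.mem_preimage, hsz₀]; exact hρt₀T₁
      · rw [hs₀, Set.mem_preimage, hsz₀, ← hγ₀, hesrc]
        exact e.map_source heγ₀
      · rw [Set.mem_preimage, hθz₀]; exact hbz₀
    refine Filter.mem_of_superset (hWopen.mem_nhds hz₀W) ?_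
    intro z hzW
    obtain ⟨⟨⟨hzb, hzV⟩, hzs₁⟩, hzs₀, hzθb⟩ := hzW
    set t : H := T.src z with htdef
    have ht : t ∈ T.unitSpace := ⟨z, rfl⟩
    obtain ⟨γ', hγ'U₁, hγ'e⟩ := hzs₁
    have hγ'e' : S.src γ' = A.rho (T.src z) := hγ'e
    have hgz : g z = γ' := by
      show e.symm (A.rho (T.src z)) = γ'
      rw [← hγ'e', hesrc]
      exact e.left_inv hγ'U₁.2
    have hsrcgz : S.src (g z) = A.rho t := by rw [hgz, hγ'e]
    set q : TransK A := ⟨(g z, t), ht, hsrcgz⟩ with hq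
    have hqO : q ∈ Subtype.val ⁻¹' Ω := by
      apply hUV
      refine Set.mem_prod.mpr ⟨?_, hzV⟩
      show g z ∈ U
      rw [hgz]
      exact hγ'U₁.1
    have hθz : θ z = z := by
      have h1 : T.src (θ z) = T.src z := by
        rw [hθ]
        simpa [← htdef] using A.src_act_unit ht hsrcgz
      apply b.injOn hzθb hzb
      rw [← hbsrc, h1]
    refine ⟨q, hqO, ?_⟩
    show A.act (g z) (T.src z) = z
    exact hθz
  have hom_i : ∀ (γ η : G) (x y : H), x ∈ T.unitSpace → y ∈ T.unitSpace →
      S.src γ = A.rho x → S.src η = A.rho y → x = T.rng (A.act η y) →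
      A.act (S.comp γ η) y = T.comp (A.act γ x) (A.act η y) := by
    intro γ η x y hx hy hγ hη hxr
    have hD : S.D γ η := A.d_of_rng hγ hη hxr
    have h1 : A.act (S.comp γ η) y = A.act γ (A.act η y) := (A.act_assoc hD hη).symm
    set z := A.act η y with hz
    have hDxz : T.D x z := by
      rw [TopGroupoid.d_iff, TopGroupoid.src_unit hx, hxr]
    have hxz : T.comp x z = z := by rw [hxr]; exact TopGroupoid.left_id z
    have h2 : A.act γ (T.comp x z) = T.comp (A.act γ x) z := A.act_right hγ hDxz
    calc A.act (S.comp γ η) y = A.act γ z := h1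
      _ = A.act γ (T.comp x z) := by rw [hxz]
      _ = T.comp (A.act γ x) z := h2
  refine ⟨cont_i, inj_i, open_i, hom_i, ?_, ?_, ?_, ?_, ?_, ?_⟩
  · -- i fixes the unit space
    rintro ⟨⟨γ, t⟩, ht, hγ⟩ hu
    show A.act γ t = t
    have hu' : γ ∈ S.unitSpace := hu
    have hγ' : S.src γ = A.rho t := hγ
    have hγt : γ = A.rho t := by rw [← TopGroupoid.src_unit hu', hγ']
    rw [hγt]
    exact A.act_unit t
  · -- p continuous
    exact continuous_fst.comp continuous_subtype_val
  · -- p surjective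
    intro γ
    obtain ⟨t, ht, hρ⟩ := hsurj (S.src γ) (TopGroupoid.src_mem_unitSpace γ)
    exact ⟨⟨(γ, t), ht, hρ.symm⟩, rfl⟩
  · -- p proper
    rw [isProperMap_iff_ultrafilter]
    refine ⟨continuous_fst.comp continuous_subtype_val, ?_⟩
    intro 𝒰 γ hconv
    set π : TransK A → T.unitSpace := fun q => ⟨q.1.2, q.2.1⟩ with hπ
    have key : Filter.Tendsto (T.unitSpace.restrict A.rho ∘ π) ↑𝒰 (𝓝 (S.src γ)) := by
      have hcomp : (T.unitSpace.restrict A.rho ∘ π)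
          = S.src ∘ (fun q : TransK A => q.1.1) := by
        funext q
        exact q.2.2.symm
      rw [hcomp]
      exact (csrcS.tendsto γ).comp hconv
    have key2 : Filter.Tendsto (T.unitSpace.restrict A.rho) ↑(𝒰.map π) (𝓝 (S.src γ)) := by
      rw [Ultrafilter.coe_map, Filter.tendsto_map'_iff]
      exact key
    obtain ⟨t, hρt, hlim⟩ := (isProperMap_iff_ultrafilter.mp hproper).2 key2
    have hlim' : Filter.Tendsto π ↑𝒰 (𝓝 t) := by
      rwa [Ultrafilter.coe_map] at hlim
    have hsnd : Filter.Tendsto (fun q : TransK A => q.1.2) ↑𝒰 (𝓝 (t : H)) :=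
      (continuous_subtype_val.tendsto t).comp hlim'
    refine ⟨⟨(γ, (t : H)), t.2, hρt.symm⟩, rfl, ?_⟩
    have h2 : Filter.Tendsto (fun q : TransK A => (q.1.1, q.1.2)) ↑𝒰 (𝓝 (γ, (t : H))) :=
      hconv.prodMk_nhds hsnd
    rw [nhds_subtype_eq_comap]
    exact Filter.map_le_iff_le_comap.mp h2
  · -- p preserves composability
    intro γ η x y hx hy hγ hη hxr
    exact A.d_of_rng hγ hη hxr
  · -- p fibrewise bijective
    intro y hy
    refine ⟨?_, ?_, ?_⟩
    · rintro ⟨⟨γ, x⟩, hx, hγ⟩ hmem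
      have hxy : x = y := hmem
      show S.src γ = A.rho y
      rw [hγ, hxy]
    · rintro ⟨⟨γ₁, x₁⟩, h₁⟩ hm₁ ⟨⟨γ₂, x₂⟩, h₂⟩ hm₂ he
      have e1 : x₁ = y := hm₁
      have e2 : x₂ = y := hm₂
      have e3 : γ₁ = γ₂ := he
      simp only [Subtype.mk.injEq, Prod.mk.injEq]
      exact ⟨e3, e1.trans e2.symm⟩
    · rintro γ hγ
      exact ⟨⟨(γ, y), hy, hγ⟩, rfl, rfl⟩
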